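/- Let E_ρ and F_ν be position and momentum observables on H = L²(ℝ) (E_ρ(X) = multiplication by ρ(X−·); F_ν(Y) = 𝓕⁻¹ E_ν(Y) 𝓕). Define the commutation domain com(E_ρ, F_ν) = {ψ ∈ H : E_ρ(X)F_ν(Y)ψ = F_ν(Y)E_ρ(X)ψ for all Borel X, Y}. Then com(E_ρ, F_ν) is a closed subspace of H invariant under all Weyl operators W(q,p) = e^{i(pQ−qP)}; consequently, by irreducibility of the Weyl representation, com(E_ρ, F_ν) is either {0} or all of H. -/

import Mathlib

open MeasureTheory Complex
open Real FourierTransform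

noncomputable section

/-- `L²(ℝ)` with Lebesgue measure. -/
abbrev L2 : Type := Lp ℂ 2 (volume : Measure ℝ)

/-- `T` is the operator of multiplication by the bounded function `x ↦ ρ(X − x)`. -/
def IsMulByMeas (ρ : Measure ℝ) (X : Set ℝ) (T : L2 →L[ℂ] L2) : Prop :=
  ∀ f : L2, (T f : ℝ → ℂ) =ᵐ[volume]
    fun x => ((ρ ((· + x) ⁻¹' X)).toReal : ℂ) * (f : ℝ → ℂ) x

/-- compactly supported smooth real function as a complex Schwartz map -/
def toSchwartzC (g : ℝ → ℝ) (hg : ContDiff ℝ (⊤ : ℕ∞) g) (hs : HasCompactSupport g) :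
    SchwartzMap ℝ ℂ where
  toFun x := (g x : ℂ)
  smooth' := Complex.ofRealCLM.contDiff.comp hg
  decay' k n := by
    have hG : HasCompactSupport (fun x : ℝ => (g x : ℂ)) :=
      hs.comp_left (g := fun r : ℝ => (r : ℂ)) (by simp)
    have hsm : ContDiff ℝ (⊤ : ℕ∞) (fun x : ℝ => (g x : ℂ)) := Complex.ofRealCLM.contDiff.comp hg
    have hcont : Continuous fun x : ℝ => ‖x‖ ^ k * ‖iteratedFDeriv ℝ n (fun x : ℝ => (g x : ℂ)) x‖ := by
      exact ((continuous_norm.pow k)).mul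
        ((hsm.continuous_iteratedFDeriv (by exact_mod_cast le_top)).norm)
    have hsupp : HasCompactSupport fun x : ℝ =>
        ‖x‖ ^ k * ‖iteratedFDeriv ℝ n (fun x : ℝ => (g x : ℂ)) x‖ :=
      ((hG.iteratedFDeriv n).norm).mul_left
    obtain ⟨C, hC⟩ := hcont.bounded_above_of_compact_support hsupp
    refine ⟨C, fun x => ?_⟩
    have := hC x
    rwa [Real.norm_eq_abs, _root_.abs_of_nonneg (by positivity)] at this

lemma fourier_l1_eq_zero {h : ℝ → ℂ} (hi : Integrable h)
    (hz : ∀ p : ℝ, ∫ x : ℝ, Complex.exp (Complex.I * p * x) * h x = 0) :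
    ∀ᵐ x : ℝ, h x = 0 := by
  have hF : ∀ w : ℝ, 𝓕 h w = 0 := by
    intro w
    rw [Real.fourier_eq']
    rw [← hz (-(2 * π * w))]
    refine integral_congr_ae (Filter.EventuallyEq.of_eq (funext fun v => ?_))
    simp only [RCLike.inner_apply, conj_trivial, smul_eq_mul]
    congr 1
    push_cast
    ring_nf
  have hflip : (innerₗ ℝ).flip = innerₗ ℝ := by
    refine LinearMap.ext fun x => LinearMap.ext fun y => ?_
    simp [real_inner_comm]
  apply ae_eq_zero_of_integral_contDiff_smul_eq_zero hi.locallyIntegrable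
  intro g gsmooth gsupp
  set G : SchwartzMap ℝ ℂ := toSchwartzC g gsmooth gsupp with hG
  set ψ : SchwartzMap ℝ ℂ := (SchwartzMap.fourierTransformCLE ℂ (SchwartzMap ℝ ℂ)).symm G with hψdef
  have hψ : 𝓕 (⇑ψ) = ⇑G := by
    have h1 : SchwartzMap.fourierTransformCLE ℂ (SchwartzMap ℝ ℂ) ψ = G :=
      (SchwartzMap.fourierTransformCLE ℂ (SchwartzMap ℝ ℂ)).apply_symm_apply G
    rw [← h1]
    rfl
  have mult := VectorFourier.integral_fourierIntegral_smul_eq_flip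
    (L := innerₗ ℝ) (μ := volume) (ν := volume) Real.continuous_fourierChar
    (by simpa using (by fun_prop : Continuous fun p : ℝ × ℝ => p.2 * p.1))
    ψ.integrable hi
  rw [hflip] at mult
  have key : ∫ x : ℝ, (𝓕 (⇑ψ)) x • h x = ∫ x : ℝ, ψ x • (𝓕 h) x := mult
  calc ∫ x : ℝ, g x • h x = ∫ x : ℝ, (𝓕 (⇑ψ)) x • h x := by
        rw [hψ]
        refine integral_congr_ae (Filter.EventuallyEq.of_eq (funext fun v => ?_))
        rw [Complex.real_smul, smul_eq_mul]
        rfl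
    _ = ∫ x : ℝ, ψ x • (𝓕 h) x := key
    _ = 0 := by simp [hF]

lemma ae_zero_or_ae_zero (Ψ G : ℝ → ℂ) (hΨ : StronglyMeasurable Ψ) (hG : StronglyMeasurable G)
    (h : ∀ q : ℝ, ∀ᵐ x : ℝ, (starRingEnd ℂ) (Ψ (x - q)) * G x = 0) :
    (∀ᵐ x : ℝ, Ψ x = 0) ∨ (∀ᵐ x : ℝ, G x = 0) := by
  set H : ℝ × ℝ → ℂ := fun z => (starRingEnd ℂ) (Ψ (z.2 - z.1)) * G z.2 with hH
  have hHm : Measurable H := by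
    have h1 : Measurable fun z : ℝ × ℝ => Ψ (z.2 - z.1) :=
      hΨ.measurable.comp (measurable_snd.sub measurable_fst)
    exact (continuous_star.measurable.comp h1).mul (hG.measurable.comp measurable_snd)
  set N := {z : ℝ × ℝ | H z ≠ 0} with hNdef
  have hN : MeasurableSet N := hHm (measurableSet_singleton 0).compl
  have hslice : ∀ q : ℝ, volume (Prod.mk q ⁻¹' N) = 0 := fun q => by
    have hq := h q
    rw [ae_iff] at hq
    exact hq
  have hN0 : (volume.prod volume) N = 0 := by
    rw [Measure.prod_apply hN]
    simp [hslice]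
  have hN' : (volume.prod volume) (Prod.swap ⁻¹' N) = 0 := by
    have h2 : (volume.prod volume) (Prod.swap ⁻¹' N)
        = ((volume.prod volume).map Prod.swap) N :=
      (Measure.map_apply measurable_swap hN).symm
    rw [h2, Measure.prod_swap, hN0]
  have hae : ∀ᵐ x : ℝ, ∀ᵐ q : ℝ, H (q, x) = 0 := by
    have hz : ∀ᵐ z : ℝ × ℝ ∂(volume.prod volume), H z.swap = 0 := by
      rw [ae_iff]
      exact hN'
    exact MeasureTheory.Measure.ae_ae_of_ae_prod hz
  by_cases hg : ∀ᵐ x : ℝ, G x = 0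
  · exact Or.inr hg
  · left
    have hfreq : ∃ᵐ x : ℝ ∂volume, ¬ G x = 0 := Filter.not_eventually.mp hg
    obtain ⟨x₀, hx₀G, hx₀⟩ := (hfreq.and_eventually hae).exists
    have hΨ0 : ∀ᵐ q : ℝ, Ψ (x₀ - q) = 0 := by
      filter_upwards [hx₀] with q hq
      rcases mul_eq_zero.mp hq with h1 | h2
      · simpa using h1
      · exact absurd h2 hx₀G
    have hmp : MeasurePreserving (fun q : ℝ => x₀ - q) volume volume :=
      Measure.measurePreserving_sub_left volume x₀
    have hfin : ∀ᵐ y : ℝ ∂(volume.map (fun q : ℝ => x₀ - q)), Ψ y = 0 := by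
      refine (ae_map_iff hmp.measurable.aemeasurable
        (show MeasurableSet {y : ℝ | Ψ y = 0} from hΨ.measurable (measurableSet_singleton 0))).mpr hΨ0
    rwa [hmp.map_eq] at hfin

/-- the commutation domain of a position observable `E_ρ` and a momentum
observable `F_ν` is a closed subspace invariant under the Weyl operators `W(q,p)`, hence
(by irreducibility of the Weyl representation) it equals `{0}` or the whole of `L²(ℝ)`. -/
theorem stmt19 (ρ ν : Measure ℝ) [IsProbabilityMeasure ρ] [IsProbabilityMeasure ν]
    (E F : Set ℝ → (L2 →L[ℂ] L2))
    (hE : ∀ X : Set ℝ, MeasurableSet X → IsMulByMeas ρ X (E X))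
    (W : ℝ → ℝ → (L2 →L[ℂ] L2))
    (hW : ∀ q p : ℝ, ∀ ψ : L2, (W q p ψ : ℝ → ℂ) =ᵐ[volume]
      fun x => Complex.exp (Complex.I * p * (x - q / 2)) * (ψ : ℝ → ℂ) (x - q))
    (hFcov : ∀ q p : ℝ, ∀ Y : Set ℝ, MeasurableSet Y →
      W q p ∘L F Y = F ((· + p) '' Y) ∘L W q p) :
    IsClosed {ψ : L2 | ∀ X Y : Set ℝ, MeasurableSet X → MeasurableSet Y →
        E X (F Y ψ) = F Y (E X ψ)} ∧
    ((0 : L2) ∈ {ψ : L2 | ∀ X Y : Set ℝ, MeasurableSet X → MeasurableSet Y →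
        E X (F Y ψ) = F Y (E X ψ)}) ∧
    (∀ (c : ℂ) (ψ ψ' : L2),
      (∀ X Y : Set ℝ, MeasurableSet X → MeasurableSet Y → E X (F Y ψ) = F Y (E X ψ)) →
      (∀ X Y : Set ℝ, MeasurableSet X → MeasurableSet Y → E X (F Y ψ') = F Y (E X ψ')) →
      (∀ X Y : Set ℝ, MeasurableSet X → MeasurableSet Y →
        E X (F Y (c • ψ + ψ')) = F Y (E X (c • ψ + ψ')))) ∧
    (∀ q p : ℝ, ∀ ψ : L2,
      (∀ X Y : Set ℝ, MeasurableSet X → MeasurableSet Y → E X (F Y ψ) = F Y (E X ψ)) →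
      (∀ X Y : Set ℝ, MeasurableSet X → MeasurableSet Y →
        E X (F Y (W q p ψ)) = F Y (E X (W q p ψ)))) ∧
    ({ψ : L2 | ∀ X Y : Set ℝ, MeasurableSet X → MeasurableSet Y →
        E X (F Y ψ) = F Y (E X ψ)} = {0} ∨
     {ψ : L2 | ∀ X Y : Set ℝ, MeasurableSet X → MeasurableSet Y →
        E X (F Y ψ) = F Y (E X ψ)} = Set.univ) := by
  set S : Set L2 := {ψ : L2 | ∀ X Y : Set ℝ, MeasurableSet X → MeasurableSet Y →
      E X (F Y ψ) = F Y (E X ψ)} with hSdef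
  -- Part 1 : closedness
  have hclosed : IsClosed S := by
    have hrw : S = ⋂ (X : Set ℝ) (Y : Set ℝ) (_ : MeasurableSet X) (_ : MeasurableSet Y),
        {ψ : L2 | E X (F Y ψ) = F Y (E X ψ)} := by
      ext ψ
      simp only [hSdef, Set.mem_iInter, Set.mem_setOf_eq]
    rw [hrw]
    exact isClosed_iInter fun X => isClosed_iInter fun Y => isClosed_iInter fun _ =>
      isClosed_iInter fun _ => isClosed_eq
        ((E X).continuous.comp (F Y).continuous) ((F Y).continuous.comp (E X).continuous)
  -- Part 2 : zero membership
  have hzeroS : (0 : L2) ∈ S := by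
    intro X Y _ _
    simp
  -- Part 3 : linear combinations
  have hlin : ∀ (c : ℂ) (ψ ψ' : L2), ψ ∈ S → ψ' ∈ S → (c • ψ + ψ') ∈ S := by
    intro c ψ ψ' h1 h2 X Y hX hY
    simp only [map_add, _root_.map_smul]
    rw [h1 X Y hX hY, h2 X Y hX hY]
  -- covariance of E under the Weyl operators
  have hEcov : ∀ (q p : ℝ) (X : Set ℝ), MeasurableSet X → ∀ ψ : L2,
      E X (W q p ψ) = W q p (E ((· + q) ⁻¹' X) ψ) := by
    intro q p X hX ψ
    have hX' : MeasurableSet ((· + q) ⁻¹' X) := hX.preimage (measurable_add_const q)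
    apply Lp.ext (p := (2 : ENNReal)) (μ := (volume : Measure ℝ))
    have h1 := hE X hX (W q p ψ)
    have h2 := hW q p ψ
    have h3 := hW q p (E ((· + q) ⁻¹' X) ψ)
    have h4 := hE ((· + q) ⁻¹' X) hX' ψ
    have hqmp : MeasurePreserving (fun x : ℝ => x - q) volume volume :=
      measurePreserving_sub_right volume q
    have h5 : (fun x : ℝ => ((E ((· + q) ⁻¹' X) ψ : ℝ → ℂ)) (x - q)) =ᵐ[volume]
        fun x : ℝ => ((ρ ((· + (x - q)) ⁻¹' ((· + q) ⁻¹' X))).toReal : ℂ)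
          * (ψ : ℝ → ℂ) (x - q) := by
      have h4' : ((E ((· + q) ⁻¹' X) ψ : ℝ → ℂ))
          =ᵐ[Measure.map (fun x : ℝ => x - q) volume]
          fun x : ℝ => ((ρ ((· + x) ⁻¹' ((· + q) ⁻¹' X))).toReal : ℂ) * (ψ : ℝ → ℂ) x := by
        rw [hqmp.map_eq]
        exact h4
      exact ae_eq_comp (μ := (volume : Measure ℝ)) hqmp.measurable.aemeasurable h4'
    calc (E X (W q p ψ) : ℝ → ℂ)
        =ᵐ[volume] fun x => ((ρ ((· + x) ⁻¹' X)).toReal : ℂ) * (W q p ψ : ℝ → ℂ) x := h1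
      _ =ᵐ[volume] fun x => Complex.exp (Complex.I * p * (x - q / 2)) *
            (((ρ ((· + (x - q)) ⁻¹' ((· + q) ⁻¹' X))).toReal : ℂ) * (ψ : ℝ → ℂ) (x - q)) := by
          filter_upwards [h2] with x hx
          rw [hx]
          have hset : ((· + (x - q)) ⁻¹' ((· + q) ⁻¹' X)) = ((· + x) ⁻¹' X) := by
            ext y
            simp only [Set.mem_preimage]
            rw [show y + (x - q) + q = y + x by ring]
          rw [hset]
          ring
      _ =ᵐ[volume] fun x => Complex.exp (Complex.I * p * (x - q / 2)) *
            ((E ((· + q) ⁻¹' X) ψ : ℝ → ℂ)) (x - q) := by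
          filter_upwards [h5] with x hx
          rw [hx]
      _ =ᵐ[volume] (W q p (E ((· + q) ⁻¹' X) ψ) : ℝ → ℂ) := h3.symm
  -- covariance of F, rewritten
  have hFcov' : ∀ (q p : ℝ) (Y : Set ℝ), MeasurableSet Y → ∀ ψ : L2,
      F Y (W q p ψ) = W q p (F ((· + p) ⁻¹' Y) ψ) := by
    intro q p Y hY ψ
    have hY' : MeasurableSet ((· + p) ⁻¹' Y) := hY.preimage (measurable_add_const p)
    have him : ((· + p) '' ((· + p) ⁻¹' Y)) = Y :=
      Set.image_preimage_eq Y (fun y => ⟨y - p, by simp⟩)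
    have hc := hFcov q p ((· + p) ⁻¹' Y) hY'
    rw [him] at hc
    calc F Y (W q p ψ) = (F Y ∘L W q p) ψ := rfl
      _ = (W q p ∘L F ((· + p) ⁻¹' Y)) ψ := by rw [← hc]
      _ = W q p (F ((· + p) ⁻¹' Y) ψ) := rfl
  -- Part 4 : Weyl invariance
  have hweyl : ∀ q p : ℝ, ∀ ψ : L2, ψ ∈ S → (W q p ψ) ∈ S := by
    intro q p ψ hψ X Y hX hY
    have hX' : MeasurableSet ((· + q) ⁻¹' X) := hX.preimage (measurable_add_const q)
    have hY' : MeasurableSet ((· + p) ⁻¹' Y) := hY.preimage (measurable_add_const p)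
    calc E X (F Y (W q p ψ)) = E X (W q p (F ((· + p) ⁻¹' Y) ψ)) := by
          rw [hFcov' q p Y hY ψ]
      _ = W q p (E ((· + q) ⁻¹' X) (F ((· + p) ⁻¹' Y) ψ)) := hEcov q p X hX _
      _ = W q p (F ((· + p) ⁻¹' Y) (E ((· + q) ⁻¹' X) ψ)) := by
          rw [hψ _ _ hX' hY']
      _ = F Y (W q p (E ((· + q) ⁻¹' X) ψ)) := (hFcov' q p Y hY _).symm
      _ = F Y (E X (W q p ψ)) := by rw [hEcov q p X hX ψ]
  refine ⟨hclosed, hzeroS, fun c ψ ψ' h1 h2 => hlin c ψ ψ' h1 h2,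
    fun q p ψ hψ => hweyl q p ψ hψ, ?_⟩
  -- Part 5 : dichotomy
  by_cases hS : S = {0}
  · exact Or.inl hS
  · right
    have hnsub : ¬ S ⊆ {0} := by
      intro hsub
      exact hS (subset_antisymm hsub (by simpa using hzeroS))
    obtain ⟨ψ₀, hψ₀S, hψ₀ne⟩ := Set.not_subset.mp hnsub
    have hψ₀0 : ψ₀ ≠ 0 := by simpa using hψ₀ne
    set K : Submodule ℂ L2 :=
      { carrier := S
        add_mem' := fun {a b} ha hb => by simpa using hlin 1 a b ha hb
        zero_mem' := hzeroS
        smul_mem' := fun c x hx => by simpa using hlin c x 0 hx hzeroS } with hKdef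
    have hKclosed : IsClosed (K : Set L2) := hclosed
    haveI : CompleteSpace K := hKclosed.completeSpace_coe
    have hbot : Kᗮ = ⊥ := by
      rw [Submodule.eq_bot_iff]
      intro g hg
      by_contra hg0
      have hginner : ∀ u ∈ K, (inner (𝕜 := ℂ) u g : ℂ) = 0 :=
        (Submodule.mem_orthogonal K g).mp hg
      have hkey : ∀ q : ℝ, ∀ᵐ x : ℝ,
          (starRingEnd ℂ) ((ψ₀ : ℝ → ℂ) (x - q)) * (g : ℝ → ℂ) x = 0 := by
        intro q
        have hW0 : ((W q 0 ψ₀ : L2) : ℝ → ℂ) =ᵐ[volume]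
            fun x => (ψ₀ : ℝ → ℂ) (x - q) := by
          filter_upwards [hW q 0 ψ₀] with x hx
          rw [hx]
          simp
        have hint : Integrable
            (fun x : ℝ => (starRingEnd ℂ) (((W q 0 ψ₀ : L2) : ℝ → ℂ) x) * (g : ℝ → ℂ) x)
            volume := by
          have := L2.integrable_inner (𝕜 := ℂ) (W q 0 ψ₀) g
          simpa [RCLike.inner_apply, mul_comm] using this
        have hzero : ∀ p : ℝ, ∫ x : ℝ, Complex.exp (Complex.I * p * x) *
            ((starRingEnd ℂ) (((W q 0 ψ₀ : L2) : ℝ → ℂ) x) * (g : ℝ → ℂ) x) = 0 := by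
          intro p
          have hmem : W q (-p) ψ₀ ∈ K := hweyl q (-p) ψ₀ hψ₀S
          have horto : (inner (𝕜 := ℂ) (W q (-p) ψ₀) g : ℂ) = 0 := hginner _ hmem
          rw [L2.inner_def] at horto
          have h1 : (fun x : ℝ =>
              (inner (𝕜 := ℂ) ((W q (-p) ψ₀ : ℝ → ℂ) x) ((g : ℝ → ℂ) x) : ℂ))
              =ᵐ[volume] fun x : ℝ => Complex.exp (Complex.I * p * (x - q / 2)) *
                ((starRingEnd ℂ) (((W q 0 ψ₀ : L2) : ℝ → ℂ) x) * (g : ℝ → ℂ) x) := by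
            filter_upwards [hW q (-p) ψ₀, hW0] with x hx hx0
            rw [RCLike.inner_apply, hx, hx0]
            rw [map_mul, ← Complex.exp_conj]
            simp only [map_mul, map_neg, map_sub, map_div₀, Complex.conj_I,
              Complex.conj_ofReal, map_ofNat, Complex.ofReal_neg]
            ring_nf
          have horto2 : ∫ x : ℝ, Complex.exp (Complex.I * p * (x - q / 2)) *
              ((starRingEnd ℂ) (((W q 0 ψ₀ : L2) : ℝ → ℂ) x) * (g : ℝ → ℂ) x) = 0 := by
            rw [← integral_congr_ae h1]
            exact horto
          have hsplit : ∫ x : ℝ, Complex.exp (Complex.I * p * x) *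
              ((starRingEnd ℂ) (((W q 0 ψ₀ : L2) : ℝ → ℂ) x) * (g : ℝ → ℂ) x)
              = Complex.exp (Complex.I * p * ((q / 2 : ℝ) : ℂ)) * ∫ x : ℝ,
                Complex.exp (Complex.I * p * (x - q / 2)) *
                ((starRingEnd ℂ) (((W q 0 ψ₀ : L2) : ℝ → ℂ) x) * (g : ℝ → ℂ) x) := by
            rw [← integral_const_mul]
            refine integral_congr_ae (Filter.EventuallyEq.of_eq (funext fun x => ?_))
            have harg : Complex.I * p * x
                = Complex.I * p * ((q / 2 : ℝ) : ℂ) + Complex.I * p * (x - q / 2) := by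
              push_cast
              ring
            rw [harg, Complex.exp_add]
            ring
          rw [hsplit, horto2, mul_zero]
        have hae0 := fourier_l1_eq_zero hint hzero
        filter_upwards [hae0, hW0] with x hx hx0
        rw [← hx0]
        exact hx
      rcases ae_zero_or_ae_zero _ _ (Lp.stronglyMeasurable ψ₀) (Lp.stronglyMeasurable g)
        hkey with hc | hc
      · exact hψ₀0 (Lp.eq_zero_iff_ae_eq_zero.mpr hc)
      · exact hg0 (Lp.eq_zero_iff_ae_eq_zero.mpr hc)
    have hKtop : K = ⊤ := Submodule.orthogonal_eq_bot_iff.mp hbot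
    rw [Set.eq_univ_iff_forall]
    intro ψ
    have : ψ ∈ K := hKtop ▸ Submodule.mem_top
    exact this
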